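/- Let d := -2 + i ∈ ℤ[i] and let 𝐚 := (2-3i, -1-2i, -3+i). For a finite nonempty sequence 𝐱 = (x₁, ..., x_l) of Gaussian integers define f(𝐱) := (x₁, ..., x_l, d, -x_l, -x_{l-1}, ..., -x₁) and g(𝐱) := (x₁, ..., x_{l-1}, x_l + 1, x_l - 1, x_{l-1}, ..., x₁). Then for every n ≥ 0 and every choice h₁, ..., hₙ ∈ {f, g}, the sequence 𝐜 = (c₁, ..., c_L) := hₙ(h_{n-1}(⋯h₁(𝐚)⋯)) is a valid HCF digit sequence: there exists z ∈ 𝔉 such that for every j with 1 ≤ j ≤ L one has T^{j-1}(z) ≠ 0 and a_j(z) = c_j. -/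

import Mathlib

open Complex

/-- The nearest Gaussian integer to a complex number, as a complex number. -/
noncomputable def nearestGaussian (z : ℂ) : ℂ :=
  (⌊z.re + 1 / 2⌋ : ℤ) + (⌊z.im + 1 / 2⌋ : ℤ) * I

/-- The fundamental domain `𝔉 = {z : [z] = 0}`. -/
noncomputable def Fdom : Set ℂ := {z : ℂ | nearestGaussian z = 0}

/-- The complex Gauss map on the fundamental domain. -/
noncomputable def gaussT (z : ℂ) : ℂ :=
  if z = 0 then 0 else z⁻¹ - nearestGaussian z⁻¹

/-- The digit `d = -2 + i`. -/
noncomputable def dG : ℂ := -2 + I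

/-- The folding operation `f(𝐱) = (x₁, ..., x_l, d, -x_l, ..., -x₁)`. -/
noncomputable def fop (x : List ℂ) : List ℂ :=
  x ++ [dG] ++ (x.reverse.map fun t => -t)

/-- The operation `g(𝐱) = (x₁, ..., x_{l-1}, x_l + 1, x_l - 1, x_{l-1}, ..., x₁)`. -/
noncomputable def gop (x : List ℂ) : List ℂ :=
  x.dropLast ++ [x.getLastD 0 + 1, x.getLastD 0 - 1] ++ x.dropLast.reverse

/-- The seed word `𝐚 = (2 - 3i, -1 - 2i, -3 + i)`. -/
noncomputable def seedA : List ℂ := [2 - 3 * I, -1 - 2 * I, -3 + I]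


section HCFAux
open Complex List

lemma le_of_sq (a b : ℝ) (hb : 0 ≤ b) (h : a^2 ≤ b^2) : a ≤ b := by nlinarith

lemma key_core (U δ MA : ℂ) (N rb ra : ℝ)
    (hns : normSq U = N + rb^2) (hNpos : 0 < N) (hrb : 0 ≤ rb)
    (hδ : ‖δ‖ ≤ rb)
    (hMA : ‖(starRingEnd ℂ) U / ((N:ℝ):ℂ) - MA‖ ≤ ra - rb/N) :
    dist ((U + δ)⁻¹) MA ≤ ra := by
  have habsU : rb < ‖U‖ := by
    have h := Complex.sq_norm U
    nlinarith [norm_nonneg U]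
  have habsUδ : (0:ℝ) < ‖U + δ‖ := by
    have h3 : ‖U‖ ≤ ‖U + δ‖ + ‖δ‖ := by
      simpa using norm_add_le (U + δ) (-δ)
    linarith
  have hne : U + δ ≠ 0 := fun h0 => by rw [h0] at habsUδ; simp at habsUδ
  have hNne : ((N:ℝ):ℂ) ≠ 0 := by
    simpa using ne_of_gt hNpos
  have hcu : (starRingEnd ℂ) U * U = ((N:ℝ):ℂ) + (((rb:ℝ)^2:ℝ):ℂ) := by
    rw [mul_comm, mul_conj, hns]; push_cast; ring
  set η : ℂ := -(((rb:ℝ)^2 : ℝ) : ℂ) - (starRingEnd ℂ) U * δ with hηdef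
  have t1 : ((U+δ)⁻¹) * (((N:ℝ):ℂ) * (U+δ)) = ((N:ℝ):ℂ) := by
    rw [mul_left_comm, inv_mul_cancel₀ hne, mul_one]
  have t2 : ((starRingEnd ℂ) U/((N:ℝ):ℂ)) * (((N:ℝ):ℂ)*(U+δ)) = (starRingEnd ℂ) U * (U+δ) := by
    field_simp
  have hid : ((U+δ)⁻¹ - (starRingEnd ℂ) U/((N:ℝ):ℂ)) * (((N:ℝ):ℂ) * (U+δ)) = η := by
    rw [sub_mul, t1, t2, hηdef]
    linear_combination -hcu
  have hsqδ : normSq δ ≤ rb^2 := by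
    have h := Complex.sq_norm δ
    nlinarith [norm_nonneg δ]
  have hconjc : (starRingEnd ℂ) ((starRingEnd ℂ) U * δ) = U * (starRingEnd ℂ) δ := by
    rw [map_mul, Complex.conj_conj]
  have e1 : normSq η = rb^4 + normSq U * normSq δ + 2 * rb^2 * (U * (starRingEnd ℂ) δ).re := by
    have hη2 : η = -((((rb:ℝ)^2 : ℝ):ℂ) + (starRingEnd ℂ) U * δ) := by rw [hηdef]; ring
    rw [hη2, normSq_neg, normSq_add, hconjc, normSq_ofReal, normSq_mul, normSq_conj,
      Complex.re_ofReal_mul]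
    ring
  have e2 : normSq (U + δ) = normSq U + normSq δ + 2 * (U * (starRingEnd ℂ) δ).re := by
    rw [normSq_add]
  have hnsη : normSq η ≤ rb^2 * normSq (U + δ) := by nlinarith
  have habsη : ‖η‖ ≤ rb * ‖U + δ‖ := by
    apply le_of_sq _ _ (by positivity)
    rw [mul_pow, Complex.sq_norm, Complex.sq_norm]
    exact hnsη
  have e3 : ‖(U+δ)⁻¹ - (starRingEnd ℂ) U/((N:ℝ):ℂ)‖ * (N * ‖U+δ‖)
      = ‖η‖ := by
    rw [← hid]
    simp [map_mul, Complex.norm_real, Real.norm_eq_abs, abs_of_pos hNpos]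
  have claim1 : dist ((U+δ)⁻¹) ((starRingEnd ℂ) U / ((N:ℝ):ℂ)) ≤ rb / N := by
    rw [Complex.dist_eq, ← mul_le_mul_iff_of_pos_right (show (0:ℝ) < N * ‖U+δ‖ by positivity)]
    rw [e3, show rb/N*(N*‖U+δ‖) = rb*‖U+δ‖ from by field_simp <;> ring]
    exact habsη
  calc dist ((U+δ)⁻¹) MA
      ≤ dist ((U+δ)⁻¹) ((starRingEnd ℂ) U / ((N:ℝ):ℂ))
        + dist ((starRingEnd ℂ) U / ((N:ℝ):ℂ)) MA := dist_triangle _ _ _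
    _ ≤ rb/N + (ra - rb/N) := add_le_add claim1 (by rwa [Complex.dist_eq])
    _ = ra := by ring

lemma key (A MB MA : ℂ) (aR aI mbR mbI maR maI rb ra : ℚ)
    (hAre : A.re = (aR:ℝ)) (hAim : A.im = (aI:ℝ))
    (hBre : MB.re = (mbR:ℝ)) (hBim : MB.im = (mbI:ℝ))
    (hCre : MA.re = (maR:ℝ)) (hCim : MA.im = (maI:ℝ))
    (hrb : 0 ≤ rb)
    (hNpos : rb^2 < (aR+mbR)^2 + (aI+mbI)^2)
    (h1 : rb ≤ ra * ((aR+mbR)^2 + (aI+mbI)^2 - rb^2))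
    (h2 : ((aR+mbR)/((aR+mbR)^2+(aI+mbI)^2-rb^2) - maR)^2
        + ((aI+mbI)/((aR+mbR)^2+(aI+mbI)^2-rb^2) + maI)^2
        ≤ (ra - rb/((aR+mbR)^2+(aI+mbI)^2-rb^2))^2)
    (w : ℂ) (hw : dist w MB ≤ (rb:ℝ)) :
    dist ((A + w)⁻¹) MA ≤ (ra:ℝ) := by
  set NQ : ℚ := (aR+mbR)^2 + (aI+mbI)^2 - rb^2 with hNQ
  have hNQ0 : 0 < NQ := by rw [hNQ]; linarith
  have hU : A + w = (A + MB) + (w - MB) := by ring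
  have hUre : (A + MB).re = (aR:ℝ) + (mbR:ℝ) := by simp [hAre, hBre]
  have hUim : (A + MB).im = (aI:ℝ) + (mbI:ℝ) := by simp [hAim, hBim]
  rw [hU]
  apply key_core (A + MB) (w - MB) MA ((NQ:ℚ):ℝ) (rb:ℝ) (ra:ℝ)
  · rw [Complex.normSq_apply, hUre, hUim, hNQ]; push_cast; ring
  · exact_mod_cast hNQ0
  · exact_mod_cast hrb
  · rwa [Complex.dist_eq] at hw
  · have hrediv : ((starRingEnd ℂ) (A+MB) / (((NQ:ℚ):ℝ):ℂ) - MA).re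
        = ((aR:ℝ)+(mbR:ℝ))/((NQ:ℚ):ℝ) - (maR:ℝ) := by
      rw [Complex.sub_re, Complex.div_ofReal_re, Complex.conj_re, hUre, hCre]
    have himdiv : ((starRingEnd ℂ) (A+MB) / (((NQ:ℚ):ℝ):ℂ) - MA).im
        = -(((aI:ℝ)+(mbI:ℝ))/((NQ:ℚ):ℝ)) - (maI:ℝ) := by
      rw [Complex.sub_im, Complex.div_ofReal_im, Complex.conj_im, hUim, hCim]
      ring
    have hra0 : (0:ℝ) ≤ (ra:ℝ) - (rb:ℝ)/((NQ:ℚ):ℝ) := by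
      have : rb / NQ ≤ ra := by rw [div_le_iff₀ hNQ0]; linarith [h1]
      have := (Rat.cast_le (K := ℝ)).2 this
      push_cast at this ⊢
      rw [sub_nonneg]
      convert this using 2
    apply le_of_sq _ _ hra0
    rw [Complex.sq_norm, Complex.normSq_apply, hrediv, himdiv]
    have h2' := (Rat.cast_le (K := ℝ)).2 h2
    push_cast at h2'
    linarith [h2']

abbrev GI := ℤ × ℤ
noncomputable def ι (p : GI) : ℂ := (p.1 : ℂ) + (p.2 : ℂ) * I

lemma keyGI (p q : ℤ) (mbR mbI rbq maR maI raq : ℚ)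
    (hrb : 0 ≤ rbq)
    (hNpos : rbq^2 < ((p:ℚ)+mbR)^2 + ((q:ℚ)+mbI)^2)
    (h1 : rbq ≤ raq * (((p:ℚ)+mbR)^2 + ((q:ℚ)+mbI)^2 - rbq^2))
    (h2 : (((p:ℚ)+mbR)/(((p:ℚ)+mbR)^2+((q:ℚ)+mbI)^2-rbq^2) - maR)^2
        + (((q:ℚ)+mbI)/(((p:ℚ)+mbR)^2+((q:ℚ)+mbI)^2-rbq^2) + maI)^2
        ≤ (raq - rbq/(((p:ℚ)+mbR)^2+((q:ℚ)+mbI)^2-rbq^2))^2)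
    (w : ℂ) (hw : dist w (((mbR:ℚ):ℂ) + ((mbI:ℚ):ℂ)*I) ≤ ((rbq:ℚ):ℝ)) :
    dist ((ι (p,q) + w)⁻¹) (((maR:ℚ):ℂ) + ((maI:ℚ):ℂ)*I) ≤ ((raq:ℚ):ℝ) := by
  apply key (ι (p,q)) (((mbR:ℚ):ℂ) + ((mbI:ℚ):ℂ)*I) (((maR:ℚ):ℂ) + ((maI:ℚ):ℂ)*I)
      (p:ℚ) (q:ℚ) mbR mbI maR maI rbq raq _ _ _ _ _ _ hrb hNpos h1 h2 w hw
  · simp [ι]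
  · simp [ι]
  · simp
  · simp
  · simp
  · simp
def ctr (p : GI) : ℚ × ℚ × ℚ :=
  if p = (-4,1) then ((-109/500), (-7/125), (3/125))
  else if p = (-3,1) then ((-3/10), (-13/125), (57/1000))
  else if p = (-3,3) then ((-47/250), (-171/1000), (9/500))
  else if p = (-2,1) then ((-383/1000), (-41/200), (87/1000))
  else if p = (-2,3) then ((-157/1000), (-47/200), (23/500))
  else if p = (-1,-2) then ((-28/125), (79/200), (89/1000))
  else if p = (-1,3) then ((-57/500), (-329/1000), (41/1000))
  else if p = (1,-3) then ((57/500), (329/1000), (41/1000))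
  else if p = (1,2) then ((28/125), (-79/200), (89/1000))
  else if p = (2,-3) then ((79/500), (47/200), (23/500))
  else if p = (2,-1) then ((383/1000), (41/200), (87/1000))
  else if p = (3,-3) then ((47/250), (171/1000), (9/500))
  else if p = (3,-1) then ((3/10), (21/200), (57/1000))
  else if p = (4,-1) then ((109/500), (7/125), (3/125))
  else (0,0,-1)

noncomputable def Cc (a : GI) : ℂ := ((ctr a).1 : ℂ) + ((ctr a).2.1 : ℂ) * I
noncomputable def Cr (a : GI) : ℝ := ((ctr a).2.2 : ℝ)
noncomputable def Dmem (a : GI) (w : ℂ) : Prop := dist w (Cc a) ≤ Cr a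

lemma CcE0 : Cc (-4,1) = (((-109/500):ℚ):ℂ) + (((-7/125):ℚ):ℂ)*I := by norm_num [Cc, ctr]
lemma CrE0 : Cr (-4,1) = (((3/125):ℚ):ℝ) := by norm_num [Cr, ctr]
lemma CcE1 : Cc (-3,1) = (((-3/10):ℚ):ℂ) + (((-13/125):ℚ):ℂ)*I := by norm_num [Cc, ctr]
lemma CrE1 : Cr (-3,1) = (((57/1000):ℚ):ℝ) := by norm_num [Cr, ctr]
lemma CcE2 : Cc (-3,3) = (((-47/250):ℚ):ℂ) + (((-171/1000):ℚ):ℂ)*I := by norm_num [Cc, ctr]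
lemma CrE2 : Cr (-3,3) = (((9/500):ℚ):ℝ) := by norm_num [Cr, ctr]
lemma CcE3 : Cc (-2,1) = (((-383/1000):ℚ):ℂ) + (((-41/200):ℚ):ℂ)*I := by norm_num [Cc, ctr]
lemma CrE3 : Cr (-2,1) = (((87/1000):ℚ):ℝ) := by norm_num [Cr, ctr]
lemma CcE4 : Cc (-2,3) = (((-157/1000):ℚ):ℂ) + (((-47/200):ℚ):ℂ)*I := by norm_num [Cc, ctr]
lemma CrE4 : Cr (-2,3) = (((23/500):ℚ):ℝ) := by norm_num [Cr, ctr]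
lemma CcE5 : Cc (-1,-2) = (((-28/125):ℚ):ℂ) + (((79/200):ℚ):ℂ)*I := by norm_num [Cc, ctr]
lemma CrE5 : Cr (-1,-2) = (((89/1000):ℚ):ℝ) := by norm_num [Cr, ctr]
lemma CcE6 : Cc (-1,3) = (((-57/500):ℚ):ℂ) + (((-329/1000):ℚ):ℂ)*I := by norm_num [Cc, ctr]
lemma CrE6 : Cr (-1,3) = (((41/1000):ℚ):ℝ) := by norm_num [Cr, ctr]
lemma CcE7 : Cc (1,-3) = (((57/500):ℚ):ℂ) + (((329/1000):ℚ):ℂ)*I := by norm_num [Cc, ctr]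
lemma CrE7 : Cr (1,-3) = (((41/1000):ℚ):ℝ) := by norm_num [Cr, ctr]
lemma CcE8 : Cc (1,2) = (((28/125):ℚ):ℂ) + (((-79/200):ℚ):ℂ)*I := by norm_num [Cc, ctr]
lemma CrE8 : Cr (1,2) = (((89/1000):ℚ):ℝ) := by norm_num [Cr, ctr]
lemma CcE9 : Cc (2,-3) = (((79/500):ℚ):ℂ) + (((47/200):ℚ):ℂ)*I := by norm_num [Cc, ctr]
lemma CrE9 : Cr (2,-3) = (((23/500):ℚ):ℝ) := by norm_num [Cr, ctr]
lemma CcE10 : Cc (2,-1) = (((383/1000):ℚ):ℂ) + (((41/200):ℚ):ℂ)*I := by norm_num [Cc, ctr]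
lemma CrE10 : Cr (2,-1) = (((87/1000):ℚ):ℝ) := by norm_num [Cr, ctr]
lemma CcE11 : Cc (3,-3) = (((47/250):ℚ):ℂ) + (((171/1000):ℚ):ℂ)*I := by norm_num [Cc, ctr]
lemma CrE11 : Cr (3,-3) = (((9/500):ℚ):ℝ) := by norm_num [Cr, ctr]
lemma CcE12 : Cc (3,-1) = (((3/10):ℚ):ℂ) + (((21/200):ℚ):ℂ)*I := by norm_num [Cc, ctr]
lemma CrE12 : Cr (3,-1) = (((57/1000):ℚ):ℝ) := by norm_num [Cr, ctr]
lemma CcE13 : Cc (4,-1) = (((109/500):ℚ):ℂ) + (((7/125):ℚ):ℂ)*I := by norm_num [Cc, ctr]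
lemma CrE13 : Cr (4,-1) = (((3/125):ℚ):ℝ) := by norm_num [Cr, ctr]

lemma DmemD (a : GI) (w : ℂ) : Dmem a w ↔ dist w (Cc a) ≤ Cr a := Iff.rfl
def PZ : List (GI × GI) := [((-4,1),(-2,1)), ((-4,1),(-1,-2)), ((-3,1),(-2,1)), ((-3,1),(-1,-2)), ((-3,1),(2,-1)), ((-3,3),(-1,3)), ((-3,3),(1,2)), ((-2,1),(-4,1)), ((-2,1),(-3,1)), ((-2,1),(-2,3)), ((-2,1),(-1,-2)), ((-2,1),(2,-3)), ((-2,1),(3,-1)), ((-2,3),(-2,1)), ((-2,3),(1,2)), ((-2,3),(2,-1)), ((-1,-2),(-4,1)), ((-1,-2),(-3,1)), ((-1,-2),(-2,1)), ((-1,-2),(1,-3)), ((-1,-2),(2,-3)), ((-1,-2),(3,-3)), ((-1,3),(-3,3)), ((-1,3),(1,2)), ((1,-3),(-1,-2)), ((1,-3),(3,-3)), ((1,2),(-3,3)), ((1,2),(-2,3)), ((1,2),(-1,3)), ((1,2),(2,-1)), ((1,2),(3,-1)), ((1,2),(4,-1)), ((2,-3),(-2,1)), ((2,-3),(-1,-2)),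 ((2,-3),(2,-1)), ((2,-1),(-3,1)), ((2,-1),(-2,3)), ((2,-1),(1,2)), ((2,-1),(2,-3)), ((2,-1),(3,-1)), ((2,-1),(4,-1)), ((3,-3),(-1,-2)), ((3,-3),(1,-3)), ((3,-1),(-2,1)), ((3,-1),(1,2)), ((3,-1),(2,-1)), ((4,-1),(1,2)), ((4,-1),(2,-1))]

lemma transfer (a b : GI) (hab : (a,b) ∈ PZ) (w : ℂ) (hw : Dmem b w) :
    Dmem a ((ι a + w)⁻¹) := by
  simp only [PZ, List.mem_cons, List.not_mem_nil, or_false, Prod.mk.injEq] at hab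
  rcases hab with ⟨rfl,rfl⟩|⟨rfl,rfl⟩|⟨rfl,rfl⟩|⟨rfl,rfl⟩|⟨rfl,rfl⟩|⟨rfl,rfl⟩|⟨rfl,rfl⟩|⟨rfl,rfl⟩|⟨rfl,rfl⟩|⟨rfl,rfl⟩|⟨rfl,rfl⟩|⟨rfl,rfl⟩|⟨rfl,rfl⟩|⟨rfl,rfl⟩|⟨rfl,rfl⟩|⟨rfl,rfl⟩|⟨rfl,rfl⟩|⟨rfl,rfl⟩|⟨rfl,rfl⟩|⟨rfl,rfl⟩|⟨rfl,rfl⟩|⟨rfl,rfl⟩|⟨rfl,rfl⟩|⟨rfl,rfl⟩|⟨rfl,rfl⟩|⟨rfl,rfl⟩|⟨rfl,rfl⟩|⟨rfl,rfl⟩|⟨rfl,rfl⟩|⟨rfl,rfl⟩|⟨rfl,rfl⟩|⟨rfl,rfl⟩|⟨rfl,rfl⟩|⟨rfl,rfl⟩|⟨rfl,rfl⟩|⟨rfl,rfl⟩|⟨rfl,rfl⟩|⟨rfl,rfl⟩|⟨rfl,rfl⟩|⟨rfl,rfl⟩|⟨rfl,rfl⟩|⟨rfl,rfl⟩|⟨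rfl,rfl⟩|⟨rfl,rfl⟩|⟨rfl,rfl⟩|⟨rfl,rfl⟩|⟨rfl,rfl⟩|⟨rfl,rfl⟩
  · rw [DmemD, CcE0, CrE0]; rw [DmemD, CcE3, CrE3] at hw
    exact keyGI (-4) (1) (-383/1000) (-41/200) (87/1000) (-109/500) (-7/125) (3/125) (by norm_num) (by norm_num) (by norm_num) (by norm_num) w hw
  · rw [DmemD, CcE0, CrE0]; rw [DmemD, CcE5, CrE5] at hw
    exact keyGI (-4) (1) (-28/125) (79/200) (89/1000) (-109/500) (-7/125) (3/125) (by norm_num) (by norm_num) (by norm_num) (by norm_num) w hw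
  · rw [DmemD, CcE1, CrE1]; rw [DmemD, CcE3, CrE3] at hw
    exact keyGI (-3) (1) (-383/1000) (-41/200) (87/1000) (-3/10) (-13/125) (57/1000) (by norm_num) (by norm_num) (by norm_num) (by norm_num) w hw
  · rw [DmemD, CcE1, CrE1]; rw [DmemD, CcE5, CrE5] at hw
    exact keyGI (-3) (1) (-28/125) (79/200) (89/1000) (-3/10) (-13/125) (57/1000) (by norm_num) (by norm_num) (by norm_num) (by norm_num) w hw
  · rw [DmemD, CcE1, CrE1]; rw [DmemD, CcE10, CrE10] at hw
    exact keyGI (-3) (1) (383/1000) (41/200) (87/1000) (-3/10) (-13/125) (57/1000) (by norm_num) (by norm_num) (by norm_num) (by norm_num) w hw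
  · rw [DmemD, CcE2, CrE2]; rw [DmemD, CcE6, CrE6] at hw
    exact keyGI (-3) (3) (-57/500) (-329/1000) (41/1000) (-47/250) (-171/1000) (9/500) (by norm_num) (by norm_num) (by norm_num) (by norm_num) w hw
  · rw [DmemD, CcE2, CrE2]; rw [DmemD, CcE8, CrE8] at hw
    exact keyGI (-3) (3) (28/125) (-79/200) (89/1000) (-47/250) (-171/1000) (9/500) (by norm_num) (by norm_num) (by norm_num) (by norm_num) w hw
  · rw [DmemD, CcE3, CrE3]; rw [DmemD, CcE0, CrE0] at hw
    exact keyGI (-2) (1) (-109/500) (-7/125) (3/125) (-383/1000) (-41/200) (87/1000) (by norm_num) (by norm_num) (by norm_num) (by norm_num) w hw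
  · rw [DmemD, CcE3, CrE3]; rw [DmemD, CcE1, CrE1] at hw
    exact keyGI (-2) (1) (-3/10) (-13/125) (57/1000) (-383/1000) (-41/200) (87/1000) (by norm_num) (by norm_num) (by norm_num) (by norm_num) w hw
  · rw [DmemD, CcE3, CrE3]; rw [DmemD, CcE4, CrE4] at hw
    exact keyGI (-2) (1) (-157/1000) (-47/200) (23/500) (-383/1000) (-41/200) (87/1000) (by norm_num) (by norm_num) (by norm_num) (by norm_num) w hw
  · rw [DmemD, CcE3, CrE3]; rw [DmemD, CcE5, CrE5] at hw
    exact keyGI (-2) (1) (-28/125) (79/200) (89/1000) (-383/1000) (-41/200) (87/1000) (by norm_num) (by norm_num) (by norm_num) (by norm_num) w hw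
  · rw [DmemD, CcE3, CrE3]; rw [DmemD, CcE9, CrE9] at hw
    exact keyGI (-2) (1) (79/500) (47/200) (23/500) (-383/1000) (-41/200) (87/1000) (by norm_num) (by norm_num) (by norm_num) (by norm_num) w hw
  · rw [DmemD, CcE3, CrE3]; rw [DmemD, CcE12, CrE12] at hw
    exact keyGI (-2) (1) (3/10) (21/200) (57/1000) (-383/1000) (-41/200) (87/1000) (by norm_num) (by norm_num) (by norm_num) (by norm_num) w hw
  · rw [DmemD, CcE4, CrE4]; rw [DmemD, CcE3, CrE3] at hw
    exact keyGI (-2) (3) (-383/1000) (-41/200) (87/1000) (-157/1000) (-47/200) (23/500) (by norm_num) (by norm_num) (by norm_num) (by norm_num) w hw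
  · rw [DmemD, CcE4, CrE4]; rw [DmemD, CcE8, CrE8] at hw
    exact keyGI (-2) (3) (28/125) (-79/200) (89/1000) (-157/1000) (-47/200) (23/500) (by norm_num) (by norm_num) (by norm_num) (by norm_num) w hw
  · rw [DmemD, CcE4, CrE4]; rw [DmemD, CcE10, CrE10] at hw
    exact keyGI (-2) (3) (383/1000) (41/200) (87/1000) (-157/1000) (-47/200) (23/500) (by norm_num) (by norm_num) (by norm_num) (by norm_num) w hw
  · rw [DmemD, CcE5, CrE5]; rw [DmemD, CcE0, CrE0] at hw
    exact keyGI (-1) (-2) (-109/500) (-7/125) (3/125) (-28/125) (79/200) (89/1000) (by norm_num) (by norm_num) (by norm_num) (by norm_num) w hw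
  · rw [DmemD, CcE5, CrE5]; rw [DmemD, CcE1, CrE1] at hw
    exact keyGI (-1) (-2) (-3/10) (-13/125) (57/1000) (-28/125) (79/200) (89/1000) (by norm_num) (by norm_num) (by norm_num) (by norm_num) w hw
  · rw [DmemD, CcE5, CrE5]; rw [DmemD, CcE3, CrE3] at hw
    exact keyGI (-1) (-2) (-383/1000) (-41/200) (87/1000) (-28/125) (79/200) (89/1000) (by norm_num) (by norm_num) (by norm_num) (by norm_num) w hw
  · rw [DmemD, CcE5, CrE5]; rw [DmemD, CcE7, CrE7] at hw
    exact keyGI (-1) (-2) (57/500) (329/1000) (41/1000) (-28/125) (79/200) (89/1000) (by norm_num) (by norm_num) (by norm_num) (by norm_num) w hw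
  · rw [DmemD, CcE5, CrE5]; rw [DmemD, CcE9, CrE9] at hw
    exact keyGI (-1) (-2) (79/500) (47/200) (23/500) (-28/125) (79/200) (89/1000) (by norm_num) (by norm_num) (by norm_num) (by norm_num) w hw
  · rw [DmemD, CcE5, CrE5]; rw [DmemD, CcE11, CrE11] at hw
    exact keyGI (-1) (-2) (47/250) (171/1000) (9/500) (-28/125) (79/200) (89/1000) (by norm_num) (by norm_num) (by norm_num) (by norm_num) w hw
  · rw [DmemD, CcE6, CrE6]; rw [DmemD, CcE2, CrE2] at hw
    exact keyGI (-1) (3) (-47/250) (-171/1000) (9/500) (-57/500) (-329/1000) (41/1000) (by norm_num) (by norm_num) (by norm_num) (by norm_num) w hw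
  · rw [DmemD, CcE6, CrE6]; rw [DmemD, CcE8, CrE8] at hw
    exact keyGI (-1) (3) (28/125) (-79/200) (89/1000) (-57/500) (-329/1000) (41/1000) (by norm_num) (by norm_num) (by norm_num) (by norm_num) w hw
  · rw [DmemD, CcE7, CrE7]; rw [DmemD, CcE5, CrE5] at hw
    exact keyGI (1) (-3) (-28/125) (79/200) (89/1000) (57/500) (329/1000) (41/1000) (by norm_num) (by norm_num) (by norm_num) (by norm_num) w hw
  · rw [DmemD, CcE7, CrE7]; rw [DmemD, CcE11, CrE11] at hw
    exact keyGI (1) (-3) (47/250) (171/1000) (9/500) (57/500) (329/1000) (41/1000) (by norm_num) (by norm_num) (by norm_num) (by norm_num) w hw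
  · rw [DmemD, CcE8, CrE8]; rw [DmemD, CcE2, CrE2] at hw
    exact keyGI (1) (2) (-47/250) (-171/1000) (9/500) (28/125) (-79/200) (89/1000) (by norm_num) (by norm_num) (by norm_num) (by norm_num) w hw
  · rw [DmemD, CcE8, CrE8]; rw [DmemD, CcE4, CrE4] at hw
    exact keyGI (1) (2) (-157/1000) (-47/200) (23/500) (28/125) (-79/200) (89/1000) (by norm_num) (by norm_num) (by norm_num) (by norm_num) w hw
  · rw [DmemD, CcE8, CrE8]; rw [DmemD, CcE6, CrE6] at hw
    exact keyGI (1) (2) (-57/500) (-329/1000) (41/1000) (28/125) (-79/200) (89/1000) (by norm_num) (by norm_num) (by norm_num) (by norm_num) w hw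
  · rw [DmemD, CcE8, CrE8]; rw [DmemD, CcE10, CrE10] at hw
    exact keyGI (1) (2) (383/1000) (41/200) (87/1000) (28/125) (-79/200) (89/1000) (by norm_num) (by norm_num) (by norm_num) (by norm_num) w hw
  · rw [DmemD, CcE8, CrE8]; rw [DmemD, CcE12, CrE12] at hw
    exact keyGI (1) (2) (3/10) (21/200) (57/1000) (28/125) (-79/200) (89/1000) (by norm_num) (by norm_num) (by norm_num) (by norm_num) w hw
  · rw [DmemD, CcE8, CrE8]; rw [DmemD, CcE13, CrE13] at hw
    exact keyGI (1) (2) (109/500) (7/125) (3/125) (28/125) (-79/200) (89/1000) (by norm_num) (by norm_num) (by norm_num) (by norm_num) w hw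
  · rw [DmemD, CcE9, CrE9]; rw [DmemD, CcE3, CrE3] at hw
    exact keyGI (2) (-3) (-383/1000) (-41/200) (87/1000) (79/500) (47/200) (23/500) (by norm_num) (by norm_num) (by norm_num) (by norm_num) w hw
  · rw [DmemD, CcE9, CrE9]; rw [DmemD, CcE5, CrE5] at hw
    exact keyGI (2) (-3) (-28/125) (79/200) (89/1000) (79/500) (47/200) (23/500) (by norm_num) (by norm_num) (by norm_num) (by norm_num) w hw
  · rw [DmemD, CcE9, CrE9]; rw [DmemD, CcE10, CrE10] at hw
    exact keyGI (2) (-3) (383/1000) (41/200) (87/1000) (79/500) (47/200) (23/500) (by norm_num) (by norm_num) (by norm_num) (by norm_num) w hw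
  · rw [DmemD, CcE10, CrE10]; rw [DmemD, CcE1, CrE1] at hw
    exact keyGI (2) (-1) (-3/10) (-13/125) (57/1000) (383/1000) (41/200) (87/1000) (by norm_num) (by norm_num) (by norm_num) (by norm_num) w hw
  · rw [DmemD, CcE10, CrE10]; rw [DmemD, CcE4, CrE4] at hw
    exact keyGI (2) (-1) (-157/1000) (-47/200) (23/500) (383/1000) (41/200) (87/1000) (by norm_num) (by norm_num) (by norm_num) (by norm_num) w hw
  · rw [DmemD, CcE10, CrE10]; rw [DmemD, CcE8, CrE8] at hw
    exact keyGI (2) (-1) (28/125) (-79/200) (89/1000) (383/1000) (41/200) (87/1000) (by norm_num) (by norm_num) (by norm_num) (by norm_num) w hw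
  · rw [DmemD, CcE10, CrE10]; rw [DmemD, CcE9, CrE9] at hw
    exact keyGI (2) (-1) (79/500) (47/200) (23/500) (383/1000) (41/200) (87/1000) (by norm_num) (by norm_num) (by norm_num) (by norm_num) w hw
  · rw [DmemD, CcE10, CrE10]; rw [DmemD, CcE12, CrE12] at hw
    exact keyGI (2) (-1) (3/10) (21/200) (57/1000) (383/1000) (41/200) (87/1000) (by norm_num) (by norm_num) (by norm_num) (by norm_num) w hw
  · rw [DmemD, CcE10, CrE10]; rw [DmemD, CcE13, CrE13] at hw
    exact keyGI (2) (-1) (109/500) (7/125) (3/125) (383/1000) (41/200) (87/1000) (by norm_num) (by norm_num) (by norm_num) (by norm_num) w hw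
  · rw [DmemD, CcE11, CrE11]; rw [DmemD, CcE5, CrE5] at hw
    exact keyGI (3) (-3) (-28/125) (79/200) (89/1000) (47/250) (171/1000) (9/500) (by norm_num) (by norm_num) (by norm_num) (by norm_num) w hw
  · rw [DmemD, CcE11, CrE11]; rw [DmemD, CcE7, CrE7] at hw
    exact keyGI (3) (-3) (57/500) (329/1000) (41/1000) (47/250) (171/1000) (9/500) (by norm_num) (by norm_num) (by norm_num) (by norm_num) w hw
  · rw [DmemD, CcE12, CrE12]; rw [DmemD, CcE3, CrE3] at hw
    exact keyGI (3) (-1) (-383/1000) (-41/200) (87/1000) (3/10) (21/200) (57/1000) (by norm_num) (by norm_num) (by norm_num) (by norm_num) w hw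
  · rw [DmemD, CcE12, CrE12]; rw [DmemD, CcE8, CrE8] at hw
    exact keyGI (3) (-1) (28/125) (-79/200) (89/1000) (3/10) (21/200) (57/1000) (by norm_num) (by norm_num) (by norm_num) (by norm_num) w hw
  · rw [DmemD, CcE12, CrE12]; rw [DmemD, CcE10, CrE10] at hw
    exact keyGI (3) (-1) (383/1000) (41/200) (87/1000) (3/10) (21/200) (57/1000) (by norm_num) (by norm_num) (by norm_num) (by norm_num) w hw
  · rw [DmemD, CcE13, CrE13]; rw [DmemD, CcE8, CrE8] at hw
    exact keyGI (4) (-1) (28/125) (-79/200) (89/1000) (109/500) (7/125) (3/125) (by norm_num) (by norm_num) (by norm_num) (by norm_num) w hw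
  · rw [DmemD, CcE13, CrE13]; rw [DmemD, CcE10, CrE10] at hw
    exact keyGI (4) (-1) (383/1000) (41/200) (87/1000) (109/500) (7/125) (3/125) (by norm_num) (by norm_num) (by norm_num) (by norm_num) w hw

def RpZ (a b : GI) : Prop := (a,b) ∈ PZ
def Pfacts (c : ℚ×ℚ×ℚ) (a : GI) : Prop :=
  c.2.2 < 0 ∨
    (0 ≤ c.2.2 ∧ c.2.2 ≤ 3/5 ∧
     c.1^2 + c.2.1^2 ≤ (3/5 - c.2.2)^2 ∧
     -1/2 < c.1 - c.2.2 ∧ c.1 + c.2.2 < 1/2 ∧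
     -1/2 < c.2.1 - c.2.2 ∧ c.2.1 + c.2.2 < 1/2 ∧
     5 ≤ (a.1:ℚ)^2 + (a.2:ℚ)^2)

lemma ctr_facts (a : GI) : Pfacts (ctr a) a := by
  by_cases h1 : a = (-4,1)
  · subst h1; norm_num [ctr, Pfacts]
  by_cases h2 : a = (-3,1)
  · subst h2; norm_num [ctr, Pfacts]
  by_cases h3 : a = (-3,3)
  · subst h3; norm_num [ctr, Pfacts]
  by_cases h4 : a = (-2,1)
  · subst h4; norm_num [ctr, Pfacts]
  by_cases h5 : a = (-2,3)
  · subst h5; norm_num [ctr, Pfacts]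
  by_cases h6 : a = (-1,-2)
  · subst h6; norm_num [ctr, Pfacts]
  by_cases h7 : a = (-1,3)
  · subst h7; norm_num [ctr, Pfacts]
  by_cases h8 : a = (1,-3)
  · subst h8; norm_num [ctr, Pfacts]
  by_cases h9 : a = (1,2)
  · subst h9; norm_num [ctr, Pfacts]
  by_cases h10 : a = (2,-3)
  · subst h10; norm_num [ctr, Pfacts]
  by_cases h11 : a = (2,-1)
  · subst h11; norm_num [ctr, Pfacts]
  by_cases h12 : a = (3,-3)
  · subst h12; norm_num [ctr, Pfacts]
  by_cases h13 : a = (3,-1)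
  · subst h13; norm_num [ctr, Pfacts]
  by_cases h14 : a = (4,-1)
  · subst h14; norm_num [ctr, Pfacts]
  have hdef : ctr a = (0,0,-1) := by
    unfold ctr
    rw [if_neg h1, if_neg h2, if_neg h3, if_neg h4, if_neg h5, if_neg h6, if_neg h7, if_neg h8, if_neg h9, if_neg h10, if_neg h11, if_neg h12, if_neg h13, if_neg h14]
  unfold Pfacts
  rw [hdef]
  left
  norm_num
lemma CcReIm (a : GI) : (Cc a).re = ((ctr a).1 : ℝ) ∧ (Cc a).im = ((ctr a).2.1 : ℝ) := by
  constructor <;> simp [Cc]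

lemma ng_floor0 (v : ℂ) (h : nearestGaussian v = 0) :
    ⌊v.re + 1/2⌋ = 0 ∧ ⌊v.im + 1/2⌋ = 0 := by
  have hre := congrArg Complex.re h
  have him := congrArg Complex.im h
  simp [nearestGaussian] at hre him
  refine ⟨?_, ?_⟩ <;> rw [Int.floor_eq_zero_iff, Set.mem_Ico] <;> constructor <;>
    linarith [hre.1, hre.2, him.1, him.2]

lemma ng_zero : nearestGaussian 0 = 0 := by
  norm_num [nearestGaussian]

lemma Dmem_facts (a : GI) (w : ℂ) (h : Dmem a w) :
    ‖w‖ ≤ 3/5 ∧ nearestGaussian w = 0 ∧ (5:ℝ) ≤ (a.1:ℝ)^2 + (a.2:ℝ)^2 := by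
  rcases ctr_facts a with hneg | ⟨h0, h35, hcc, hre1, hre2, him1, him2, hdig⟩
  · exfalso
    have h1 : (0:ℝ) ≤ Cr a := le_trans dist_nonneg h
    have h2 : Cr a < 0 := by unfold Cr; exact_mod_cast hneg
    linarith
  have hr : dist w (Cc a) ≤ ((ctr a).2.2 : ℝ) := h
  have habsC : ‖Cc a‖ ≤ (3/5 : ℝ) - ((ctr a).2.2 : ℝ) := by
    apply le_of_sq
    · have h' := (Rat.cast_le (K := ℝ)).2 h35
      push_cast at h'
      linarith
    · rw [Complex.sq_norm, Complex.normSq_apply, (CcReIm a).1, (CcReIm a).2]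
      have := (Rat.cast_le (K := ℝ)).2 hcc
      push_cast at this
      linarith [this]
  have hred : |w.re - ((ctr a).1:ℝ)| ≤ ((ctr a).2.2 : ℝ) := by
    have h5 := Complex.abs_re_le_norm (w - Cc a)
    rw [Complex.sub_re, (CcReIm a).1] at h5
    rw [← Complex.dist_eq] at h5
    exact le_trans h5 hr
  have himd : |w.im - ((ctr a).2.1:ℝ)| ≤ ((ctr a).2.2 : ℝ) := by
    have h5 := Complex.abs_im_le_norm (w - Cc a)
    rw [Complex.sub_im, (CcReIm a).2] at h5
    rw [← Complex.dist_eq] at h5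
    exact le_trans h5 hr
  rw [abs_le] at hred himd
  have c1 : (-1/2 : ℝ) < ((ctr a).1:ℝ) - ((ctr a).2.2:ℝ) := by
    have h' := (Rat.cast_lt (K := ℝ)).2 hre1
    push_cast at h'
    linarith
  have c2 : ((ctr a).1:ℝ) + ((ctr a).2.2:ℝ) < 1/2 := by
    have h' := (Rat.cast_lt (K := ℝ)).2 hre2
    push_cast at h'
    linarith
  have c3 : (-1/2 : ℝ) < ((ctr a).2.1:ℝ) - ((ctr a).2.2:ℝ) := by
    have h' := (Rat.cast_lt (K := ℝ)).2 him1
    push_cast at h'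
    linarith
  have c4 : ((ctr a).2.1:ℝ) + ((ctr a).2.2:ℝ) < 1/2 := by
    have h' := (Rat.cast_lt (K := ℝ)).2 him2
    push_cast at h'
    linarith
  refine ⟨?_, ?_, ?_⟩
  · calc ‖w‖ = ‖(w - Cc a) + Cc a‖ := by ring_nf
      _ ≤ ‖w - Cc a‖ + ‖Cc a‖ := norm_add_le _ _
      _ ≤ ((ctr a).2.2 : ℝ) + ((3/5:ℝ) - ((ctr a).2.2 : ℝ)) := by
          rw [← Complex.dist_eq]; exact add_le_add hr habsC
      _ = 3/5 := by ring
  · have f1 : ⌊w.re + 1/2⌋ = 0 := by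
      rw [Int.floor_eq_zero_iff, Set.mem_Ico]
      constructor <;> linarith [hred.1, hred.2]
    have f2 : ⌊w.im + 1/2⌋ = 0 := by
      rw [Int.floor_eq_zero_iff, Set.mem_Ico]
      constructor <;> linarith [himd.1, himd.2]
    unfold nearestGaussian
    rw [f1, f2]
    norm_num
  · have := (Rat.cast_le (K := ℝ)).2 hdig
    push_cast at this
    convert this using 1 <;> push_cast <;> ring

noncomputable def valZ : List GI → ℂ
  | [] => 0
  | a :: t => (ι a + valZ t)⁻¹

def ΛZ : List GI := [(-3,1),(-2,3),(2,-3)]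

def lastL (s : List GI) : Prop := ∀ b, s.getLast? = some b → b ∈ ΛZ

lemma baseD (b : GI) (hb : b ∈ ΛZ) : Dmem b ((ι b + 0)⁻¹) := by
  have h0 : dist (0:ℂ) (((0:ℚ):ℂ) + ((0:ℚ):ℂ)*I) ≤ ((0:ℚ):ℝ) := by norm_num
  simp only [ΛZ, List.mem_cons, List.not_mem_nil, or_false] at hb
  rcases hb with rfl|rfl|rfl
  · rw [DmemD, CcE1, CrE1]
    exact keyGI (-3) (1) 0 0 0 (-3/10) (-13/125) (57/1000) (by norm_num) (by norm_num)
      (by norm_num) (by norm_num) 0 h0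
  · rw [DmemD, CcE4, CrE4]
    exact keyGI (-2) (3) 0 0 0 (-157/1000) (-47/200) (23/500) (by norm_num) (by norm_num)
      (by norm_num) (by norm_num) 0 h0
  · rw [DmemD, CcE9, CrE9]
    exact keyGI (2) (-3) 0 0 0 (79/500) (47/200) (23/500) (by norm_num) (by norm_num)
      (by norm_num) (by norm_num) 0 h0

lemma lastL_tail (s : List GI) (h : lastL s) : lastL s.tail := by
  rcases s with _ | ⟨a, t⟩
  · exact h
  · rcases t with _ | ⟨x, xs⟩
    · intro b hb; simp at hb
    · intro b hb
      apply h b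
      rwa [List.getLast?_cons_cons]

lemma tails : ∀ (s : List GI), List.IsChain RpZ s → lastL s → ∀ a t, s = a :: t → Dmem a (valZ s) := by
  intro s
  induction s with
  | nil => intro _ _ a t hat; exact absurd hat (by simp)
  | cons x xs ih =>
    intro hch hl a t hat
    cases hat
    cases xs with
    | nil =>
      have hx : x ∈ ΛZ := hl x rfl
      show Dmem x (valZ [x])
      simp only [valZ]
      exact baseD x hx
    | cons y ys =>
      have hxy : RpZ x y := (List.isChain_cons_cons.mp hch).1
      have ih' := ih (List.IsChain.tail hch) (lastL_tail _ hl) y ys rfl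
      show Dmem x (valZ (x :: y :: ys))
      simp only [valZ]
      exact transfer x y hxy _ ih'

lemma nearest_shift (p : GI) (v : ℂ) (hv : nearestGaussian v = 0) :
    nearestGaussian (ι p + v) = ι p := by
  obtain ⟨h1, h2⟩ := ng_floor0 v hv
  have e1 : (ι p + v).re = (p.1 : ℝ) + v.re := by simp [ι]
  have e2 : (ι p + v).im = (p.2 : ℝ) + v.im := by simp [ι]
  unfold nearestGaussian
  rw [e1, e2, add_assoc, Int.floor_intCast_add, add_assoc, Int.floor_intCast_add, h1, h2]
  simp [ι]

lemma stepT (a : GI) (t : List GI) (hcons : List.IsChain RpZ (a::t)) (hl : lastL (a::t)) :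
    valZ (a::t) ≠ 0 ∧ gaussT (valZ (a::t)) = valZ t ∧
      nearestGaussian (valZ (a::t))⁻¹ = ι a := by
  have hval : valZ (a::t) = (ι a + valZ t)⁻¹ := rfl
  have hvt : ‖valZ t‖ ≤ 3/5 ∧ nearestGaussian (valZ t) = 0 := by
    cases t with
    | nil => exact ⟨by norm_num [valZ], by simp only [valZ]; exact ng_zero⟩
    | cons b ts =>
      have hD := tails (b::ts) (List.IsChain.tail hcons) (lastL_tail _ hl) b ts rfl
      exact ⟨(Dmem_facts _ _ hD).1, (Dmem_facts _ _ hD).2.1⟩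
  have hDa : Dmem a (valZ (a::t)) := tails _ hcons hl a t rfl
  have hdig := (Dmem_facts a _ hDa).2.2
  have hns : Complex.normSq (ι a) = (a.1:ℝ)^2 + (a.2:ℝ)^2 := by
    simp [ι, Complex.normSq_apply]
    ring
  have habsa : 2 ≤ ‖ι a‖ := by
    nlinarith [Complex.sq_norm (ι a), norm_nonneg (ι a), hdig, hns]
  have hden : ι a + valZ t ≠ 0 := by
    intro h0
    have hia : ι a = -(valZ t) := by linear_combination h0
    rw [hia, norm_neg] at habsa
    linarith [hvt.1]
  have hne : valZ (a::t) ≠ 0 := by rw [hval]; exact inv_ne_zero hden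
  have hinv : (valZ (a::t))⁻¹ = ι a + valZ t := by rw [hval, inv_inv]
  have hnear : nearestGaussian (ι a + valZ t) = ι a := nearest_shift a (valZ t) hvt.2
  refine ⟨hne, ?_, ?_⟩
  · unfold gaussT
    rw [if_neg hne, hinv, hnear]
    ring
  · rw [hinv, hnear]

lemma chain_drop (s : List GI) (hch : List.IsChain RpZ s) (hl : lastL s) (j : ℕ) :
    List.IsChain RpZ (s.drop j) ∧ lastL (s.drop j) := by
  induction j with
  | zero => exact ⟨hch, hl⟩
  | succ j ih =>
    rw [← List.tail_drop]
    exact ⟨List.IsChain.tail ih.1, lastL_tail _ ih.2⟩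

lemma iter_eq (xz : List GI) (hch : List.IsChain RpZ xz) (hl : lastL xz) (j : ℕ) :
    gaussT^[j] (valZ xz) = valZ (xz.drop j) := by
  induction j with
  | zero => simp
  | succ j ih =>
    rw [Function.iterate_succ_apply', ih, ← List.tail_drop]
    have hcd := chain_drop xz hch hl j
    rcases hd : xz.drop j with _ | ⟨a, t⟩
    · simp [valZ, gaussT]
    · rw [hd] at hcd
      rw [List.tail_cons]
      exact (stepT a t hcd.1 hcd.2).2.1
def negG (p : GI) : GI := (-p.1, -p.2)
def dZ : GI := (-2,1)

def fopZ (x : List GI) : List GI := x ++ [dZ] ++ (x.reverse.map negG)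

def gopZ (x : List GI) : List GI :=
  x.dropLast ++ [((x.getLastD (0,0)).1 + 1, (x.getLastD (0,0)).2),
    ((x.getLastD (0,0)).1 - 1, (x.getLastD (0,0)).2)] ++ x.dropLast.reverse

def SLZ : List (GI × GI) := [((-1,-2),(-3,1)), ((1,2),(-2,3)), ((-1,-2),(2,-3))]

def seedZ : List GI := [(2,-3),(-1,-2),(-3,1)]

def GoodZ (x : List GI) : Prop :=
  List.IsChain RpZ x ∧ ∃ y b, x = (2,-3) :: (-1,-2) :: (y ++ [b]) ∧
    ((((-1,-2) : GI) :: y).getLastD (0,0), b) ∈ SLZ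

instance RpZ_dec (a b : GI) : Decidable (RpZ a b) := inferInstanceAs (Decidable ((a,b) ∈ PZ))

lemma P_negswap : ∀ p ∈ PZ, ((negG p.2, negG p.1) ∈ PZ) := by decide
lemma P_swap : ∀ p ∈ PZ, ((p.2, p.1) ∈ PZ) := by decide
lemma SL_f1 : ∀ s ∈ SLZ, ((s.2, dZ) ∈ PZ) := by decide
lemma SL_f2 : ∀ s ∈ SLZ, ((dZ, negG s.2) ∈ PZ) := by decide
lemma SL_g1 : ∀ s ∈ SLZ, ((s.1, ((s.2).1+1, (s.2).2)) ∈ PZ) := by decide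
lemma SL_g2 : ∀ s ∈ SLZ, ((((s.2).1+1, (s.2).2), ((s.2).1-1, (s.2).2)) ∈ PZ) := by decide
lemma SL_g3 : ∀ s ∈ SLZ, ((((s.2).1-1, (s.2).2), s.1) ∈ PZ) := by decide
lemma SL_lastL : ∀ s ∈ SLZ, s.2 ∈ ΛZ := by decide

lemma good_seed : GoodZ seedZ := by
  refine ⟨?_, [], (-3,1), rfl, by decide⟩
  show List.IsChain RpZ [((2:ℤ),(-3:ℤ)),((-1:ℤ),(-2:ℤ)),((-3:ℤ),(1:ℤ))]
  exact List.isChain_cons_cons.mpr ⟨by decide, List.isChain_cons_cons.mpr ⟨by decide, List.isChain_singleton _⟩⟩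

lemma getLast?_eq (l : List GI) (d : GI) (hl : l ≠ []) :
    l.getLast? = some (l.getLastD d) := by
  induction l generalizing d with
  | nil => exact absurd rfl hl
  | cons a t ih =>
    cases t with
    | nil => rfl
    | cons x xs =>
      rw [List.getLast?_cons_cons, ih a (by simp)]
      rfl

lemma good_shape_last (x : List GI) (h : GoodZ x) :
    ∃ b ∈ ΛZ, x.getLast? = some b := by
  obtain ⟨_, y, b, hx, hsl⟩ := h
  refine ⟨b, SL_lastL _ hsl, ?_⟩
  rw [hx, show ((2:ℤ),(-3:ℤ)) :: ((-1:ℤ),(-2:ℤ)) :: (y ++ [b]) =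
    (((2:ℤ),(-3:ℤ)) :: ((-1:ℤ),(-2:ℤ)) :: y) ++ [b] from by simp]
  exact List.getLast?_concat

lemma good_lastL (x : List GI) (h : GoodZ x) : lastL x := by
  obtain ⟨b, hb, hlast⟩ := good_shape_last x h
  intro b' hb'
  rw [hlast] at hb'
  injection hb' with hh
  rwa [← hh]

lemma good_fop (x : List GI) (h : GoodZ x) : GoodZ (fopZ x) := by
  obtain ⟨hch, y, b, hx, hsl⟩ := h
  obtain ⟨b0, hb0, hlast⟩ := good_shape_last x ⟨hch, y, b, hx, hsl⟩
  have hbb : b0 = b := by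
    rw [hx, show ((2:ℤ),(-3:ℤ)) :: ((-1:ℤ),(-2:ℤ)) :: (y ++ [b]) =
      (((2:ℤ),(-3:ℤ)) :: ((-1:ℤ),(-2:ℤ)) :: y) ++ [b] from by simp,
      List.getLast?_concat] at hlast
    injection hlast with hh
    exact hh.symm
  subst hbb
  constructor
  · -- chain
    unfold fopZ
    rw [List.append_assoc, List.isChain_append]
    refine ⟨hch, ?_, ?_⟩
    · rw [List.singleton_append, List.isChain_cons]
      constructor
      · intro h2 hh2
        rw [List.head?_map, List.head?_reverse, hlast] at hh2
        simp only [Option.map_some] at hh2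
        injection hh2 with hh3
        rw [← hh3]
        exact SL_f2 _ hsl
      · rw [List.isChain_map, List.isChain_reverse]
        refine List.IsChain.imp ?_ hch
        intro a b' hab
        exact P_negswap (a, b') hab
    · intro xl hxl yh hyh
      rw [hlast] at hxl
      injection hxl with h1
      rw [List.singleton_append, List.head?_cons] at hyh
      injection hyh with h2
      rw [← h1, ← h2]
      exact SL_f1 _ hsl
  · refine ⟨y ++ [b0] ++ [dZ] ++ (negG b0 :: (y.reverse.map negG ++ [(1,2)])), (-2,3), ?_, ?_⟩
    · rw [hx]
      unfold fopZ negG dZ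
      simp [hx]
    · rw [show ((-1:ℤ),(-2:ℤ)) :: (y ++ [b0] ++ [dZ] ++ (negG b0 :: (y.reverse.map negG ++ [((1:ℤ),(2:ℤ))]))) =
        (((-1:ℤ),(-2:ℤ)) :: (y ++ [b0] ++ [dZ] ++ (negG b0 :: y.reverse.map negG))) ++ [((1:ℤ),(2:ℤ))] from by simp,
        List.getLastD_concat]
      decide

lemma good_gop (x : List GI) (h : GoodZ x) : GoodZ (gopZ x) := by
  obtain ⟨hch, y, b, hx, hsl⟩ := h
  have hx' : x = (((2:ℤ),(-3:ℤ)) :: ((-1:ℤ),(-2:ℤ)) :: y) ++ [b] := by rw [hx]; simp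
  have hdrop : x.dropLast = ((2:ℤ),(-3:ℤ)) :: ((-1:ℤ),(-2:ℤ)) :: y := by
    rw [hx', List.dropLast_concat]
  have hlastD : x.getLastD (0,0) = b := by rw [hx', List.getLastD_concat]
  have hs : (((2:ℤ),(-3:ℤ)) :: ((-1:ℤ),(-2:ℤ)) :: y).getLast? =
      some ((((-1:ℤ),(-2:ℤ)) :: y).getLastD (0,0)) := by
    rw [List.getLast?_cons_cons]
    exact getLast?_eq _ _ (by simp)
  have hchpre : List.IsChain RpZ (((2:ℤ),(-3:ℤ)) :: ((-1:ℤ),(-2:ℤ)) :: y) := by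
    rw [hx'] at hch
    exact (List.isChain_append.mp hch).1
  constructor
  · unfold gopZ
    rw [hdrop, hlastD, List.append_assoc, List.isChain_append]
    refine ⟨hchpre, ?_, ?_⟩
    · rw [List.isChain_append]
      refine ⟨?_, ?_, ?_⟩
      · exact List.isChain_cons_cons.mpr ⟨SL_g2 _ hsl, List.isChain_singleton _⟩
      · rw [List.isChain_reverse]
        refine List.IsChain.imp ?_ hchpre
        intro a b' hab
        exact P_swap (a, b') hab
      · intro xl hxl yh hyh
        rw [show [((b.1+1 : ℤ), b.2), ((b.1-1 : ℤ), b.2)].getLast? = some ((b.1-1, b.2)) from rfl] at hxl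
        injection hxl with h1
        rw [List.head?_reverse, hs] at hyh
        injection hyh with h2
        rw [← h1, ← h2]
        exact SL_g3 _ hsl
    · intro xl hxl yh hyh
      rw [hs] at hxl
      injection hxl with h1
      rw [show ([((b.1+1 : ℤ), b.2), ((b.1-1 : ℤ), b.2)] ++ (((2:ℤ),(-3:ℤ)) :: ((-1:ℤ),(-2:ℤ)) :: y).reverse).head? = some ((b.1+1, b.2)) from rfl] at hyh
      injection hyh with h2
      rw [← h1, ← h2]
      exact SL_g1 _ hsl
  · refine ⟨y ++ [((b.1+1 : ℤ), b.2), ((b.1-1 : ℤ), b.2)] ++ (y.reverse ++ [((-1:ℤ),(-2:ℤ))]), (2,-3), ?_, ?_⟩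
    · unfold gopZ
      rw [hdrop, hlastD]
      simp
    · rw [show ((-1:ℤ),(-2:ℤ)) :: (y ++ [((b.1+1 : ℤ), b.2), ((b.1-1 : ℤ), b.2)] ++ (y.reverse ++ [((-1:ℤ),(-2:ℤ))])) =
        (((-1:ℤ),(-2:ℤ)) :: (y ++ [((b.1+1 : ℤ), b.2), ((b.1-1 : ℤ), b.2)] ++ y.reverse)) ++ [((-1:ℤ),(-2:ℤ))] from by simp,
        List.getLastD_concat]
      decide
lemma map_getLastD (l : List GI) : ∀ d : GI, (l.map ι).getLastD (ι d) = ι (l.getLastD d) := by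
  induction l with
  | nil => intro d; rfl
  | cons a t ih =>
    intro d
    rw [List.map_cons, List.getLastD_cons, List.getLastD_cons]
    exact ih a

lemma neg_ι (t : GI) : -(ι t) = ι (negG t) := by
  simp [ι, negG]
  push_cast
  ring

lemma dG_ι : dG = ι dZ := by
  simp [dG, dZ, ι]

lemma map_fop (x : List GI) : fop (x.map ι) = (fopZ x).map ι := by
  unfold fop fopZ
  have h2 : [dG] = List.map ι [dZ] := by simp [dG_ι]
  have h3 : (List.map ι x).reverse.map (fun t => -t) = List.map ι (x.reverse.map negG) := by
    rw [← List.map_reverse, List.map_map, List.map_map]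
    exact List.map_congr_left (fun t _ => neg_ι t)
  rw [h2, h3, ← List.map_append, ← List.map_append]

lemma map_gop (x : List GI) : gop (x.map ι) = (gopZ x).map ι := by
  unfold gop gopZ
  have h1 : (x.map ι).getLastD 0 = ι (x.getLastD (0,0)) := by
    have h := map_getLastD x (0,0)
    have h0 : ι ((0:ℤ),(0:ℤ)) = 0 := by simp [ι]
    rwa [h0] at h
  have h4 : [(x.map ι).getLastD 0 + 1, (x.map ι).getLastD 0 - 1]
      = List.map ι [((x.getLastD (0,0)).1 + 1, (x.getLastD (0,0)).2),
          ((x.getLastD (0,0)).1 - 1, (x.getLastD (0,0)).2)] := by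
    rw [h1]
    simp only [List.map_cons, List.map_nil, List.cons.injEq, and_true]
    constructor <;> (simp [ι]; push_cast; ring)
  rw [h4, ← List.map_dropLast, ← List.map_reverse, ← List.map_append, ← List.map_append]

lemma fold_good (fs : List (List ℂ → List ℂ)) :
    (∀ φ ∈ fs, φ = fop ∨ φ = gop) → ∀ xz : List GI, GoodZ xz →
    ∃ yz : List GI, GoodZ yz ∧ fs.foldl (fun s t => t s) (xz.map ι) = yz.map ι := by
  induction fs with
  | nil => intro _ xz h; exact ⟨xz, h, rfl⟩
  | cons φ fs ih =>
    intro hφ xz h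
    have h1 := hφ φ (List.mem_cons_self)
    have hstep : ∃ y1, GoodZ y1 ∧ φ (xz.map ι) = y1.map ι := by
      rcases h1 with rfl | rfl
      exacts [⟨fopZ xz, good_fop _ h, map_fop xz⟩, ⟨gopZ xz, good_gop _ h, map_gop xz⟩]
    obtain ⟨y1, hg1, he1⟩ := hstep
    obtain ⟨yz, hgz, hez⟩ := ih (fun ψ hψ => hφ ψ (List.mem_cons_of_mem _ hψ)) y1 hg1
    exact ⟨yz, hgz, by rw [List.foldl_cons, he1, hez]⟩

lemma seedA_eq : seedA = seedZ.map ι := by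
  unfold seedA seedZ ι
  norm_num
  try constructor <;> try ring

end HCFAux

theorem stmt14 (n : ℕ) (h : Fin n → List ℂ → List ℂ)
    (hh : ∀ i : Fin n, h i = fop ∨ h i = gop)
    (c : List ℂ) (hc : c = (List.ofFn h).foldl (fun s t => t s) seedA) :
    ∃ z ∈ Fdom, ∀ (j : ℕ) (hj : j < c.length),
      gaussT^[j] z ≠ 0 ∧ nearestGaussian (gaussT^[j] z)⁻¹ = c.get ⟨j, hj⟩ := by
  have hfs : ∀ φ ∈ List.ofFn h, φ = fop ∨ φ = gop := by
    intro φ hφ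
    rw [List.mem_ofFn] at hφ
    obtain ⟨i, rfl⟩ := hφ
    exact hh i
  obtain ⟨yz, hgood, heq⟩ := fold_good (List.ofFn h) hfs seedZ good_seed
  have hc' : c = yz.map ι := by rw [hc, seedA_eq, heq]
  subst hc'
  have hch : List.IsChain RpZ yz := hgood.1
  have hl : lastL yz := good_lastL yz hgood
  refine ⟨valZ yz, ?_, ?_⟩
  · obtain ⟨_, y, b, hx, _⟩ := hgood
    have hD : Dmem ((2:ℤ),(-3:ℤ)) (valZ yz) := tails yz hch hl _ _ hx
    exact (Dmem_facts _ _ hD).2.1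
  · intro j hj
    have hj' : j < yz.length := by
      rw [List.length_map] at hj
      exact hj
    have hiter := iter_eq yz hch hl j
    have hcd := chain_drop yz hch hl j
    have hdj : yz.drop j = yz[j] :: yz.drop (j+1) := List.drop_eq_getElem_cons hj'
    rw [hdj] at hcd
    have hst := stepT yz[j] (yz.drop (j+1)) hcd.1 hcd.2
    rw [hiter, hdj]
    refine ⟨hst.1, ?_⟩
    rw [hst.2.2, List.get_eq_getElem, List.getElem_map]
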